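/- A bivector field π on M is foliated if and only if for every function H ∈ C^∞(M), the image of (L_{X_H} π)^# is contained in the image of π^# (as maps on 1-forms: for every 1-form α there exists a 1-form β with (L_{X_H} π)^#(α) = π^#(β)). -/

import Mathlib

open Matrix

noncomputable def lieBracketVF {n : ℕ} (X Y : (Fin n → ℝ) → (Fin n → ℝ)) :
    (Fin n → ℝ) → (Fin n → ℝ) :=
  fun m => fderiv ℝ Y m (X m) - fderiv ℝ X m (Y m)

noncomputable def gradf {n : ℕ} (F : (Fin n → ℝ) → ℝ) (m : Fin n → ℝ) : Fin n → ℝ :=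
  fun i => fderiv ℝ F m (Pi.single i 1)

noncomputable def ham {n : ℕ} (π : (Fin n → ℝ) → Matrix (Fin n) (Fin n) ℝ)
    (F : (Fin n → ℝ) → ℝ) : (Fin n → ℝ) → (Fin n → ℝ) :=
  fun m => π m *ᵥ gradf F m

def SmoothBiv {n : ℕ} (π : (Fin n → ℝ) → Matrix (Fin n) (Fin n) ℝ) : Prop :=
  ∀ i j, ContDiff ℝ (⊤ : ℕ∞) fun m => π m i j

def AntiSymmBiv {n : ℕ} (π : (Fin n → ℝ) → Matrix (Fin n) (Fin n) ℝ) : Prop :=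
  ∀ m, (π m)ᵀ = -π m

def Foliated {n : ℕ} (π : (Fin n → ℝ) → Matrix (Fin n) (Fin n) ℝ) : Prop :=
  ∀ α β : (Fin n → ℝ) → (Fin n → ℝ), ContDiff ℝ (⊤ : ℕ∞) α → ContDiff ℝ (⊤ : ℕ∞) β →
    ∃ γ : (Fin n → ℝ) → (Fin n → ℝ), ContDiff ℝ (⊤ : ℕ∞) γ ∧
      ∀ m, lieBracketVF (fun p => π p *ᵥ α p) (fun p => π p *ᵥ β p) m = π m *ᵥ γ m

def WeaklyFoliated {n : ℕ} (π : (Fin n → ℝ) → Matrix (Fin n) (Fin n) ℝ) : Prop :=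
  ∀ α β : (Fin n → ℝ) → (Fin n → ℝ), ContDiff ℝ (⊤ : ℕ∞) α → ContDiff ℝ (⊤ : ℕ∞) β →
    ∀ m, ∃ ξ : Fin n → ℝ,
      lieBracketVF (fun p => π p *ᵥ α p) (fun p => π p *ᵥ β p) m = π m *ᵥ ξ

noncomputable def pd {n : ℕ} (f : (Fin n → ℝ) → ℝ) (l : Fin n) (m : Fin n → ℝ) : ℝ :=
  fderiv ℝ f m (Pi.single l 1)

noncomputable def schouten {n : ℕ} (π : (Fin n → ℝ) → Matrix (Fin n) (Fin n) ℝ)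
    (m : Fin n → ℝ) (i j k : Fin n) : ℝ :=
  ∑ l, (π m l i * pd (fun p => π p j k) l m + π m l j * pd (fun p => π p k i) l m
      + π m l k * pd (fun p => π p i j) l m)

noncomputable def pb {n : ℕ} (π : (Fin n → ℝ) → Matrix (Fin n) (Fin n) ℝ)
    (F G : (Fin n → ℝ) → ℝ) (m : Fin n → ℝ) : ℝ :=
  dotProduct (gradf G m) (π m *ᵥ gradf F m)

noncomputable def jacobianM {n : ℕ} (X : (Fin n → ℝ) → (Fin n → ℝ)) (m : Fin n → ℝ) :
    Matrix (Fin n) (Fin n) ℝ :=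
  Matrix.of fun i l => fderiv ℝ (fun p => X p i) m (Pi.single l 1)

noncomputable def lieDerivBiv {n : ℕ} (X : (Fin n → ℝ) → (Fin n → ℝ))
    (π : (Fin n → ℝ) → Matrix (Fin n) (Fin n) ℝ) (m : Fin n → ℝ) :
    Matrix (Fin n) (Fin n) ℝ :=
  (Matrix.of fun i j => fderiv ℝ (fun p => π p i j) m (X m))
    - jacobianM X m * π m - π m * (jacobianM X m)ᵀ

section Aux

variable {n : ℕ}

lemma smoothTop_diffAt {f : (Fin n → ℝ) → ℝ} (hf : ContDiff ℝ (⊤ : ℕ∞) f) (m : Fin n → ℝ) :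
    DifferentiableAt ℝ f m :=
  (hf.differentiable (by simp)).differentiableAt

lemma smooth_fderiv_apply {f : (Fin n → ℝ) → ℝ} (hf : ContDiff ℝ (⊤ : ℕ∞) f)
    {V : (Fin n → ℝ) → (Fin n → ℝ)} (hV : ContDiff ℝ (⊤ : ℕ∞) V) :
    ContDiff ℝ (⊤ : ℕ∞) fun m => fderiv ℝ f m (V m) :=
  (hf.fderiv_right (by exact_mod_cast le_top)).clm_apply hV

lemma fderiv_expand (f : (Fin n → ℝ) → ℝ) (m : Fin n → ℝ) (v : Fin n → ℝ) :
    fderiv ℝ f m v = ∑ l, v l * fderiv ℝ f m (Pi.single l 1) := by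
  have h : v = ∑ l, v l • (Pi.single l 1 : Fin n → ℝ) := by
    funext i; simp [Finset.sum_apply, Pi.single_apply]
  conv_lhs => rw [h]
  rw [map_sum]; simp [smul_eq_mul]

lemma fderiv_pi_apply {Y : (Fin n → ℝ) → (Fin n → ℝ)} {m : Fin n → ℝ}
    (h : ∀ i, DifferentiableAt ℝ (fun p => Y p i) m) (v : Fin n → ℝ) (i : Fin n) :
    fderiv ℝ Y m v i = fderiv ℝ (fun p => Y p i) m v := by
  have h2 : fderiv ℝ Y m = ContinuousLinearMap.pi fun i => fderiv ℝ (fun p => Y p i) m :=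
    fderiv_pi h
  rw [h2]; rfl

lemma sum3_perm {F G : Fin n → Fin n → Fin n → ℝ}
    (e : (Fin n × Fin n × Fin n) ≃ (Fin n × Fin n × Fin n))
    (h : ∀ x y z, G x y z = F (e (x, y, z)).1 (e (x, y, z)).2.1 (e (x, y, z)).2.2) :
    (∑ x, ∑ y, ∑ z, F x y z) = ∑ x, ∑ y, ∑ z, G x y z := by
  have key : ∀ H : Fin n → Fin n → Fin n → ℝ,
      (∑ p : Fin n × Fin n × Fin n, H p.1 p.2.1 p.2.2) = ∑ x, ∑ y, ∑ z, H x y z := by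
    intro H
    rw [Fintype.sum_prod_type]
    exact Finset.sum_congr rfl fun a _ => by rw [Fintype.sum_prod_type]
  rw [← key F, ← key G]
  exact (Fintype.sum_equiv e (fun p => G p.1 p.2.1 p.2.2) (fun p => F p.1 p.2.1 p.2.2)
    (fun p => h p.1 p.2.1 p.2.2)).symm

lemma fderiv_sum_mul {f g : Fin n → (Fin n → ℝ) → ℝ}
    (hf : ∀ j, ContDiff ℝ (⊤ : ℕ∞) (f j)) (hg : ∀ j, ContDiff ℝ (⊤ : ℕ∞) (g j))
    (m v : Fin n → ℝ) :
    fderiv ℝ (fun p => ∑ j, f j p * g j p) m v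
      = ∑ j, (fderiv ℝ (f j) m v * g j m + f j m * fderiv ℝ (g j) m v) := by
  rw [fderiv_fun_sum (fun j _ => (show DifferentiableAt ℝ (fun p => f j p * g j p) m from (smoothTop_diffAt (hf j) m).mul (smoothTop_diffAt (hg j) m)))]
  rw [ContinuousLinearMap.sum_apply]
  refine Finset.sum_congr rfl fun j _ => ?_
  rw [fderiv_fun_mul (smoothTop_diffAt (hf j) m) (smoothTop_diffAt (hg j) m)]
  simp only [ContinuousLinearMap.add_apply, ContinuousLinearMap.smul_apply, smul_eq_mul]
  ring

lemma fderiv_mulVec_comp {π : (Fin n → ℝ) → Matrix (Fin n) (Fin n) ℝ}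
    (hs : SmoothBiv π) {β : (Fin n → ℝ) → (Fin n → ℝ)} (hβ : ContDiff ℝ (⊤ : ℕ∞) β)
    (m : Fin n → ℝ) (i : Fin n) (v : Fin n → ℝ) :
    fderiv ℝ (fun p => (π p *ᵥ β p) i) m v
      = ∑ j, (fderiv ℝ (fun p => π p i j) m v * β m j
          + π m i j * fderiv ℝ (fun p => β p j) m v) := by
  have h1 : (fun p => (π p *ᵥ β p) i) = fun p => ∑ j, π p i j * β p j := by
    funext p; simp [mulVec, dotProduct]
  rw [h1]
  exact fderiv_sum_mul (fun j => hs i j) (fun j => contDiff_pi.1 hβ j) m v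

lemma mulVec_comp_smooth {π : (Fin n → ℝ) → Matrix (Fin n) (Fin n) ℝ}
    (hs : SmoothBiv π) {β : (Fin n → ℝ) → (Fin n → ℝ)} (hβ : ContDiff ℝ (⊤ : ℕ∞) β)
    (k : Fin n) : ContDiff ℝ (⊤ : ℕ∞) fun m => (π m *ᵥ β m) k := by
  have h : (fun m => (π m *ᵥ β m) k) = fun m => ∑ j, π m k j * β m j := by
    funext m; simp [mulVec, dotProduct]
  rw [h]
  exact ContDiff.sum fun j _ => (hs k j).mul (contDiff_pi.1 hβ j)

noncomputable def Gam (X β : (Fin n → ℝ) → (Fin n → ℝ)) (m : Fin n → ℝ) : Fin n → ℝ :=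
  fun j => fderiv ℝ (fun p => β p j) m (X m)
    + ∑ k, fderiv ℝ (fun p => X p k) m (Pi.single j 1) * β m k

lemma Gam_smooth {X β : (Fin n → ℝ) → (Fin n → ℝ)}
    (hX : ∀ i, ContDiff ℝ (⊤ : ℕ∞) fun p => X p i) (hβ : ContDiff ℝ (⊤ : ℕ∞) β) :
    ContDiff ℝ (⊤ : ℕ∞) (Gam X β) := by
  refine contDiff_pi.2 fun j => ContDiff.add ?_ ?_
  · exact smooth_fderiv_apply (contDiff_pi.1 hβ j) (contDiff_pi.2 hX)
  · exact ContDiff.sum fun k _ =>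
      (smooth_fderiv_apply (hX k) contDiff_const).mul (contDiff_pi.1 hβ k)

lemma key {π : (Fin n → ℝ) → Matrix (Fin n) (Fin n) ℝ} (hs : SmoothBiv π)
    {X β : (Fin n → ℝ) → (Fin n → ℝ)}
    (hX : ∀ i, ContDiff ℝ (⊤ : ℕ∞) fun p => X p i) (hβ : ContDiff ℝ (⊤ : ℕ∞) β)
    (m : Fin n → ℝ) :
    lieBracketVF X (fun p => π p *ᵥ β p) m
      = lieDerivBiv X π m *ᵥ β m + π m *ᵥ Gam X β m := by
  have hβj : ∀ j, DifferentiableAt ℝ (fun p => β p j) m := fun j =>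
    smoothTop_diffAt (contDiff_pi.1 hβ j) m
  have hYd : ∀ i, DifferentiableAt ℝ (fun p => (π p *ᵥ β p) i) m := by
    intro i
    have h1 : (fun p => (π p *ᵥ β p) i) = fun p => ∑ j, π p i j * β p j := by
      funext p; simp [mulVec, dotProduct]
    rw [h1]
    exact DifferentiableAt.fun_sum fun j _ => (smoothTop_diffAt (hs i j) m).mul (hβj j)
  have hXd : ∀ i, DifferentiableAt ℝ (fun p => X p i) m := fun i =>
    smoothTop_diffAt (hX i) m
  funext i
  show (fderiv ℝ (fun p => π p *ᵥ β p) m (X m) - fderiv ℝ X m ((π m *ᵥ β m))) i = _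
  rw [Pi.sub_apply, fderiv_pi_apply hYd, fderiv_pi_apply hXd,
    fderiv_mulVec_comp hs hβ, fderiv_expand (fun p => X p i) m]
  simp only [lieDerivBiv, jacobianM, Pi.add_apply, mulVec, dotProduct, Gam,
    Matrix.sub_apply, Matrix.mul_apply, Matrix.of_apply, Matrix.transpose_apply]
  simp only [sub_mul, Finset.sum_mul, Finset.mul_sum, mul_add, add_mul,
    Finset.sum_sub_distrib, Finset.sum_add_distrib]
  have h1 : ∑ x : Fin n, ∑ l : Fin n,
        (fderiv ℝ (fun p => X p i) m) (Pi.single l 1) * π m l x * β m x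
      = ∑ x : Fin n, ∑ l : Fin n,
        π m x l * β m l * (fderiv ℝ (fun p => X p i) m) (Pi.single x 1) := by
    rw [Finset.sum_comm]
    exact Finset.sum_congr rfl fun x _ => Finset.sum_congr rfl fun l _ => by ring
  have h2 : ∑ x : Fin n, ∑ l : Fin n,
        π m i x * ((fderiv ℝ (fun p => X p l) m) (Pi.single x 1) * β m l)
      = ∑ x : Fin n, ∑ l : Fin n,
        π m i l * (fderiv ℝ (fun p => X p x) m) (Pi.single l 1) * β m x := by
    rw [Finset.sum_comm]
    exact Finset.sum_congr rfl fun x _ => Finset.sum_congr rfl fun l _ => by ring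
  rw [h1, h2]
  ring

noncomputable def corr {n : ℕ} (π : (Fin n → ℝ) → Matrix (Fin n) (Fin n) ℝ)
    (α β : (Fin n → ℝ) → (Fin n → ℝ)) (m : Fin n → ℝ) : Fin n → ℝ := fun l =>
  -(∑ k, fderiv ℝ (fun p => α p l) m (Pi.single k 1) * (π m *ᵥ β m) k)
  - ∑ j, (∑ k, π m k j * β m k) * fderiv ℝ (fun p => α p j) m (Pi.single l 1)

lemma corr_smooth {π : (Fin n → ℝ) → Matrix (Fin n) (Fin n) ℝ} (hs : SmoothBiv π)
    {α β : (Fin n → ℝ) → (Fin n → ℝ)} (hα : ContDiff ℝ (⊤ : ℕ∞) α)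
    (hβ : ContDiff ℝ (⊤ : ℕ∞) β) : ContDiff ℝ (⊤ : ℕ∞) (corr π α β) := by
  refine contDiff_pi.2 fun l => ContDiff.sub (ContDiff.neg ?_) ?_
  · exact ContDiff.sum fun k _ =>
      (smooth_fderiv_apply (contDiff_pi.1 hα l) contDiff_const).mul
        (mulVec_comp_smooth hs hβ k)
  · exact ContDiff.sum fun j _ =>
      (ContDiff.sum fun k _ => (hs k j).mul (contDiff_pi.1 hβ k)).mul
        (smooth_fderiv_apply (contDiff_pi.1 hα j) contDiff_const)

lemma decomp {π : (Fin n → ℝ) → Matrix (Fin n) (Fin n) ℝ} (hs : SmoothBiv π)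
    {α : (Fin n → ℝ) → (Fin n → ℝ)} (hα : ContDiff ℝ (⊤ : ℕ∞) α)
    (β : (Fin n → ℝ) → (Fin n → ℝ)) (m : Fin n → ℝ) :
    lieDerivBiv (fun p => π p *ᵥ α p) π m *ᵥ β m
      = (∑ j, α m j • (lieDerivBiv (fun p i => π p i j) π m *ᵥ β m))
        + π m *ᵥ corr π α β m := by
  have e1 : ∀ (i : Fin n) (v : Fin n → ℝ),
      fderiv ℝ (fun p => ∑ j, π p i j * α p j) m v
        = ∑ j, (fderiv ℝ (fun p => π p i j) m v * α m j
            + π m i j * fderiv ℝ (fun p => α p j) m v) := fun i v =>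
    fderiv_sum_mul (fun j => hs i j) (fun j => contDiff_pi.1 hα j) m v
  have e2 : ∀ (i k : Fin n), fderiv ℝ (fun p => π p i k) m (π m *ᵥ α m)
      = ∑ l, (∑ j, π m l j * α m j) * fderiv ℝ (fun p => π p i k) m (Pi.single l 1) := by
    intro i k
    rw [fderiv_expand (fun p => π p i k) m]
    exact Finset.sum_congr rfl fun l _ => by simp [mulVec, dotProduct]
  have e3 : ∀ (i k j : Fin n), fderiv ℝ (fun p => π p i k) m (fun i' => π m i' j)
      = ∑ l, π m l j * fderiv ℝ (fun p => π p i k) m (Pi.single l 1) := fun i k j =>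
    fderiv_expand (fun p => π p i k) m _
  funext i
  simp only [lieDerivBiv, jacobianM, Pi.add_apply, Finset.sum_apply, Pi.smul_apply,
    Matrix.sub_apply, Matrix.mul_apply, Matrix.of_apply, Matrix.transpose_apply,
    smul_eq_mul, corr, mulVec, dotProduct]
  simp only [e1, e2, e3]
  simp only [sub_mul, mul_sub, Finset.sum_mul, Finset.mul_sum, mul_add, add_mul,
    Finset.sum_sub_distrib, Finset.sum_add_distrib, mul_neg, neg_mul, sub_eq_add_neg,
    neg_add, Finset.sum_neg_distrib, neg_neg]
  have h1 : (∑ a : Fin n, ∑ b : Fin n, ∑ c : Fin n,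
        π m b c * α m c * (fderiv ℝ (fun p => π p i a) m) (Pi.single b 1) * β m a)
      = ∑ a : Fin n, ∑ b : Fin n, ∑ c : Fin n,
        α m a * (π m c a * (fderiv ℝ (fun p => π p i b) m) (Pi.single c 1) * β m b) :=
    sum3_perm ⟨fun p => (p.2.1, p.2.2, p.1), fun p => (p.2.2, p.1, p.2.1),
      fun p => rfl, fun p => rfl⟩
      (fun x y z => by simp only [Equiv.coe_fn_mk]; ring)
  have h2 : (∑ a : Fin n, ∑ b : Fin n, ∑ c : Fin n,
        (fderiv ℝ (fun p => π p i c) m) (Pi.single b 1) * α m c * π m b a * β m a)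
      = ∑ a : Fin n, ∑ b : Fin n, ∑ c : Fin n,
        α m a * ((fderiv ℝ (fun p => π p i a) m) (Pi.single c 1) * π m c b * β m b) :=
    sum3_perm ⟨fun p => (p.2.1, p.2.2, p.1), fun p => (p.2.2, p.1, p.2.1),
      fun p => rfl, fun p => rfl⟩
      (fun x y z => by simp only [Equiv.coe_fn_mk]; ring)
  have h3 : (∑ a : Fin n, ∑ b : Fin n, ∑ c : Fin n,
        π m i c * (fderiv ℝ (fun p => α p c) m) (Pi.single b 1) * π m b a * β m a)
      = ∑ a : Fin n, ∑ b : Fin n, ∑ c : Fin n,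
        π m i a * ((fderiv ℝ (fun p => α p a) m) (Pi.single b 1) * (π m b c * β m c)) :=
    sum3_perm ⟨fun p => (p.2.2, p.2.1, p.1), fun p => (p.2.2, p.2.1, p.1),
      fun p => rfl, fun p => rfl⟩
      (fun x y z => by simp only [Equiv.coe_fn_mk]; ring)
  have h4 : (∑ a : Fin n, ∑ b : Fin n, ∑ c : Fin n,
        π m i b * ((fderiv ℝ (fun p => π p a c) m) (Pi.single b 1) * α m c) * β m a)
      = ∑ a : Fin n, ∑ b : Fin n, ∑ c : Fin n,
        α m a * (π m i c * (fderiv ℝ (fun p => π p b a) m) (Pi.single c 1) * β m b) :=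
    sum3_perm ⟨fun p => (p.2.1, p.2.2, p.1), fun p => (p.2.2, p.1, p.2.1),
      fun p => rfl, fun p => rfl⟩
      (fun x y z => by simp only [Equiv.coe_fn_mk]; ring)
  have h5 : (∑ a : Fin n, ∑ b : Fin n, ∑ c : Fin n,
        π m i b * (π m a c * (fderiv ℝ (fun p => α p c) m) (Pi.single b 1)) * β m a)
      = ∑ a : Fin n, ∑ b : Fin n, ∑ c : Fin n,
        π m i a * (π m c b * β m c * (fderiv ℝ (fun p => α p b) m) (Pi.single a 1)) :=
    sum3_perm ⟨fun p => (p.2.2, p.1, p.2.1), fun p => (p.2.1, p.2.2, p.1),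
      fun p => rfl, fun p => rfl⟩
      (fun x y z => by simp only [Equiv.coe_fn_mk]; ring)
  linear_combination h1 - h2 - h3 - h4 - h5

lemma ham_coord (π : (Fin n → ℝ) → Matrix (Fin n) (Fin n) ℝ) (j : Fin n) :
    ham π (fun p => p j) = fun p i => π p i j := by
  funext p i
  have h : fderiv ℝ (fun q : Fin n → ℝ => q j) p = ContinuousLinearMap.proj j := by
    change fderiv ℝ (⇑(ContinuousLinearMap.proj (R := ℝ) (φ := fun _ : Fin n => ℝ) j)) p = _
    exact ContinuousLinearMap.fderiv _
  simp [ham, gradf, mulVec, dotProduct, h, Pi.single_apply]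

lemma mulVec_sum_smul (M : Matrix (Fin n) (Fin n) ℝ) (c : Fin n → ℝ)
    (v : Fin n → (Fin n → ℝ)) :
    M *ᵥ (∑ j, c j • v j) = ∑ j, c j • (M *ᵥ v j) := by
  rw [← Matrix.mulVecLin_apply, map_sum]
  simp [Matrix.mulVecLin_apply]

lemma gradf_smooth {H : (Fin n → ℝ) → ℝ} (hH : ContDiff ℝ (⊤ : ℕ∞) H) :
    ContDiff ℝ (⊤ : ℕ∞) (gradf H) :=
  contDiff_pi.2 fun _ => smooth_fderiv_apply hH contDiff_const

lemma ham_comp_smooth {π : (Fin n → ℝ) → Matrix (Fin n) (Fin n) ℝ} (hs : SmoothBiv π)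
    {H : (Fin n → ℝ) → ℝ} (hH : ContDiff ℝ (⊤ : ℕ∞) H) (i : Fin n) :
    ContDiff ℝ (⊤ : ℕ∞) fun p => ham π H p i :=
  mulVec_comp_smooth hs (gradf_smooth hH) i

end Aux

theorem foliated_iff_lie_derivative_image {n : ℕ}
    (π : (Fin n → ℝ) → Matrix (Fin n) (Fin n) ℝ)
    (hs : SmoothBiv π) (ha : AntiSymmBiv π) :
    Foliated π ↔
      ∀ H : (Fin n → ℝ) → ℝ, ContDiff ℝ (⊤ : ℕ∞) H →
        ∀ α : (Fin n → ℝ) → (Fin n → ℝ), ContDiff ℝ (⊤ : ℕ∞) α →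
          ∃ β : (Fin n → ℝ) → (Fin n → ℝ), ContDiff ℝ (⊤ : ℕ∞) β ∧
            ∀ m, lieDerivBiv (ham π H) π m *ᵥ α m = π m *ᵥ β m := by
  constructor
  · -- Foliated → image condition
    intro hF H hH α hα
    obtain ⟨γ, hγs, hγ⟩ := hF (gradf H) α (gradf_smooth hH) hα
    refine ⟨fun m => γ m - Gam (ham π H) α m,
      hγs.sub (Gam_smooth (fun i => ham_comp_smooth hs hH i) hα), fun m => ?_⟩
    have hk := key hs (fun i => ham_comp_smooth hs hH i) hα m
    have hb : lieBracketVF (ham π H) (fun p => π p *ᵥ α p) m = π m *ᵥ γ m := hγ m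
    rw [hb] at hk
    rw [Matrix.mulVec_sub]
    rw [eq_sub_iff_add_eq, ← hk]
  · -- image condition → Foliated
    intro hyp α β hα hβ
    choose B hB1 hB2 using fun j : Fin n => hyp (fun p => p j) (contDiff_apply ℝ ℝ j) β hβ
    have hB2' : ∀ (j : Fin n) m, lieDerivBiv (fun p i => π p i j) π m *ᵥ β m
        = π m *ᵥ B j m := by
      intro j m
      rw [← ham_coord π j]
      exact hB2 j m
    have hXc : ∀ i, ContDiff ℝ (⊤ : ℕ∞) fun p => (π p *ᵥ α p) i := fun i =>
      mulVec_comp_smooth hs hα i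
    refine ⟨fun m => (∑ j, α m j • B j m) + (corr π α β m + Gam (fun p => π p *ᵥ α p) β m),
      ?_, fun m => ?_⟩
    · refine ContDiff.add (ContDiff.sum fun j _ => ContDiff.smul (contDiff_pi.1 hα j) (hB1 j))
        (ContDiff.add (corr_smooth hs hα hβ) (Gam_smooth hXc hβ))
    · have hk := key hs hXc hβ m
      rw [hk, decomp hs hα β m]
      simp only [hB2']
      rw [Matrix.mulVec_add, Matrix.mulVec_add, mulVec_sum_smul]
      ring_nf
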